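/- Let G be a finite group, p an odd prime, A = ⟨a⟩ a cyclic subgroup of G of order pⁿ, and γ : A → Aut(G) a relative gamma function; write a^{γ(a)} = a^s. Then for every k ≥ 0, the k-th power of a in the group (A,∘) equals a^{e_s(k)}, where e_s(0) = 0 and e_s(k) = Σ_{i=0}^{k−1} s^i. Consequently the order of a in (A,∘) equals the order of a in A, and (A,∘) is generated by a. -/

import Mathlib

/- Formalization of results from "Hopf-Galois structures on extensions of degree p²q and
skew braces of order p²q: the cyclic Sylow p-subgroup case" (Campedel, Caranti, Del Corso).

Conventions: the paper composes permutations/automorphisms left-to-right and writes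
`x^α` for the action; in Mathlib composition is right-to-left, so the paper's product
`αβ` is rendered as `β * α`, the paper's `x^α` as `α x`, and the paper's conjugate
`α^β = β⁻¹αβ` as `β * α * β⁻¹`. -/

namespace HGS

universe u v

variable {G : Type*} [Group G]

/-- A gamma function (GF) on `G`: a map `γ : G → Aut G` satisfying the gamma functional
equation `γ(g^{γ(h)}·h) = γ(g)γ(h)` (the right-hand side is the paper's product, which in
Mathlib's composition order reads `γ h * γ g`). -/
def IsGammaFunction (γ : G → MulAut G) : Prop :=
  ∀ g h : G, γ (γ h g * h) = γ h * γ g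

/-- The circle operation `g ∘ h = g^{γ(h)} · h` associated to a gamma function. -/
def circ (γ : G → MulAut G) (g h : G) : G := γ h g * h

/-- A relative gamma function (RGF) on a subgroup `A ≤ G` (encoded as a function on all
of `G` whose values outside `A` are irrelevant): `A` is `γ(A)`-invariant and the gamma
functional equation holds on `A`. -/
def IsRGFOn (A : Subgroup G) (γ : G → MulAut G) : Prop :=
  (∀ x ∈ A, ∀ y ∈ A, γ y x ∈ A) ∧ (∀ x ∈ A, ∀ y ∈ A, γ (γ y x * y) = γ y * γ x)

/-- `circPow γ a k` is the `k`-th power `a^{∘k}` of `a` in `(A, ∘)`. -/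
def circPow (γ : G → MulAut G) (a : G) : ℕ → G
  | 0 => 1
  | k + 1 => circ γ (circPow γ a k) a

open Finset in
/-- If a truncated geometric sum `∑_{i<m} sⁱ` with `m` a positive power of an odd prime `p`
is divisible by `p`, then `s ≡ 1 (mod p)`. -/
lemma geomsum_mod_one {p : ℕ} (hp : p.Prime) {s m : ℕ} (hm : 0 < m)
    (hmp : ∃ j, m = p ^ j) (h : p ∣ ∑ i ∈ range m, s ^ i) : s % p = 1 := by
  haveI : Fact p.Prime := ⟨hp⟩
  have h0 : ((∑ i ∈ range m, s ^ i : ℕ) : ZMod p) = 0 := (ZMod.natCast_eq_zero_iff _ _).2 h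
  push_cast at h0
  set σ : ZMod p := (s : ZMod p) with hσ
  have hσ1 : σ = 1 := by
    by_contra hne
    have hgeom := geom_sum_eq hne m
    rw [hgeom] at h0
    have hσm : σ ^ m = 1 := by
      have hd : σ - 1 ≠ 0 := sub_ne_zero.2 hne
      field_simp at h0
      linear_combination h0
    have hσ0 : σ ≠ 0 := by
      intro h0'
      rw [h0', zero_pow hm.ne'] at hσm
      exact zero_ne_one hσm
    have hdvd1 : orderOf σ ∣ m := orderOf_dvd_of_pow_eq_one hσm
    have hdvd2 : orderOf σ ∣ p - 1 := orderOf_dvd_of_pow_eq_one (ZMod.pow_card_sub_one_eq_one hσ0)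
    obtain ⟨j, rfl⟩ := hmp
    have hcop : Nat.Coprime (p ^ j) (p - 1) := by
      apply Nat.Coprime.pow_left
      rw [Nat.coprime_self_sub_right (Nat.one_le_of_lt hp.one_lt)]
      exact Nat.coprime_one_right p
    have : orderOf σ = 1 := Nat.eq_one_of_dvd_coprimes hcop hdvd1 hdvd2
    exact hne (orderOf_eq_one_iff.1 this)
  have : (s : ZMod p) = ((1 : ℕ) : ZMod p) := by simpa using hσ1
  rwa [ZMod.natCast_eq_natCast_iff', Nat.mod_eq_of_lt hp.one_lt] at this

open Finset in
/-- Lifting-the-exponent for truncated geometric sums: if `p` is an odd prime and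
`s ≡ 1 (mod p)`, then `pⁿ ∣ ∑_{i<k} sⁱ` iff `pⁿ ∣ k`. -/
lemma geomsum_pow_dvd_iff {p : ℕ} (hp : p.Prime) (hp2 : p ≠ 2) {s : ℕ} (hs : s % p = 1)
    (n k : ℕ) : p ^ n ∣ ∑ i ∈ range k, s ^ i ↔ p ^ n ∣ k := by
  haveI : Fact p.Prime := ⟨hp⟩
  have hp1 : 1 < p := hp.one_lt
  rcases Nat.eq_zero_or_pos k with rfl | hk
  · simp
  rcases eq_or_ne s 1 with rfl | hs1
  · simp
  have hps : ¬ p ∣ s := by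
    intro hd
    rw [Nat.mod_eq_zero_of_dvd hd] at hs
    omega
  have hs2 : 2 ≤ s := by
    rcases Nat.lt_or_ge s 2 with h | h
    · interval_cases s
      · rw [Nat.zero_mod] at hs; omega
      · omega
    · exact h
  have hst : s = p * (s / p) + 1 := by
    conv_lhs => rw [← Nat.div_add_mod s p]
    rw [hs]
  have hdvd : p ∣ s - 1 := ⟨s / p, by omega⟩
  have hcast : ((s - 1 : ℕ) : ℤ) = (s : ℤ) - 1 := by
    push_cast [Nat.one_le_iff_ne_zero.2 (by omega : s ≠ 0)]; omega
  have hE : (∑ i ∈ range k, s ^ i) * (s - 1) = s ^ k - 1 := by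
    have h1 : ((∑ i ∈ range k, s ^ i : ℕ) : ℤ) * ((s:ℤ) - 1) = (s:ℤ)^k - 1 := by
      push_cast
      exact geom_sum_mul (s : ℤ) k
    have hsk : 1 ≤ s ^ k := Nat.one_le_pow k s (by omega)
    have h2 : ((s ^ k - 1 : ℕ) : ℤ) = (s:ℤ)^k - 1 := by push_cast [hsk]; omega
    have : ((∑ i ∈ range k, s ^ i) * (s - 1) : ℕ) = ((s ^ k - 1 : ℕ) : ℤ) := by
      rw [Nat.cast_mul, hcast, h1, h2]
    exact_mod_cast this
  have hE0 : (∑ i ∈ range k, s ^ i) ≠ 0 := by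
    intro h0
    rw [h0, Nat.zero_mul] at hE
    have hsk : 1 ≤ s ^ k := Nat.one_le_pow k s (by omega)
    have hsk2 : 2 ≤ s ^ k := by
      calc 2 = 2 ^ 1 := rfl
      _ ≤ s ^ k := Nat.pow_le_pow_left hs2 1 |>.trans (Nat.pow_le_pow_right (by omega) hk)
    omega
  have hs10 : s - 1 ≠ 0 := by omega
  have hlte : padicValNat p (s ^ k - 1 ^ k) = padicValNat p (s - 1) + padicValNat p k :=
    padicValNat.pow_sub_pow (hp.odd_of_ne_two hp2) (by omega) (by simpa) (by simpa using hps)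
      hk.ne'
  have hval : padicValNat p (∑ i ∈ range k, s ^ i) = padicValNat p k := by
    have hmul := padicValNat.mul (p := p) hE0 hs10
    rw [hE] at hmul
    simp only [one_pow] at hlte
    omega
  rw [hp.pow_dvd_iff_le_factorization hE0, hp.pow_dvd_iff_le_factorization hk.ne',
    Nat.factorization_def _ hp, Nat.factorization_def _ hp, hval]

/-- Type synonym (as a structure, to avoid instance clashes with the subgroup's own group
structure) carrying the circle group structure on a subgroup `A`. -/
structure CircT {G : Type u} [Group G] (A : Subgroup G) where
  val : G
  mem : val ∈ A

theorem CircT.val_injective {G : Type u} [Group G] (A : Subgroup G) :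
    Function.Injective (CircT.val (A := A)) := by
  rintro ⟨x, hx⟩ ⟨y, hy⟩ h
  simpa using h

/-- Corollary `cor:same_generator` of the paper.  If `A = ⟨a⟩` is
cyclic of order `pⁿ` (`p` odd), `γ` is an RGF on `A`, and `a^{γ(a)} = a^s`, then
`a^{∘k} = a^{e_s(k)}` with `e_s(k) = Σ_{i<k} sⁱ`; hence the order of `a` in `(A, ∘)`
equals the order of `a` in `A`, and `(A, ∘)` is generated by `a`. -/
theorem circ_powers_of_generator
    {G : Type u} [Group G] [Finite G] {p n : ℕ} (hp : p.Prime) (hp2 : p ≠ 2)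
    (a : G) (ha : orderOf a = p ^ n) (γ : G → MulAut G)
    (hγ : IsRGFOn (Subgroup.zpowers a) γ) (s : ℕ) (hs : γ a a = a ^ s) :
    (∀ k : ℕ, circPow γ a k = a ^ (∑ i ∈ Finset.range k, s ^ i)) ∧
    (∀ k : ℕ, circPow γ a k = 1 ↔ orderOf a ∣ k) ∧
    (∀ x ∈ Subgroup.zpowers a, ∃ k : ℕ, circPow γ a k = x) := by
  classical
  set A : Subgroup G := Subgroup.zpowers a with hA
  -- Part 1: `a^{∘k} = a^{e_s(k)}`.
  have part1 : ∀ k : ℕ, circPow γ a k = a ^ (∑ i ∈ Finset.range k, s ^ i) := by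
    intro k
    induction k with
    | zero => simp [circPow]
    | succ k ih =>
      show circ γ (circPow γ a k) a = _
      rw [ih, circ, map_pow, hs, ← pow_mul, geom_sum_succ, pow_succ]
  -- The circle group structure on (a copy of) `A`.
  letI : Finite (CircT A) := Finite.of_injective _ (CircT.val_injective A)
  letI : Mul (CircT A) := ⟨fun x y => ⟨circ γ x.val y.val,
    mul_mem (hγ.1 _ x.mem _ y.mem) y.mem⟩⟩
  letI : One (CircT A) := ⟨⟨1, one_mem A⟩⟩
  have hmulval : ∀ x y : CircT A, (x * y).val = γ y.val x.val * y.val := fun _ _ => rfl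
  have honeval : (1 : CircT A).val = 1 := rfl
  have assoc : ∀ x y z : CircT A, x * y * z = x * (y * z) := by
    intro x y z
    apply CircT.val_injective
    simp only [hmulval, circ]
    rw [map_mul, hγ.2 _ y.mem _ z.mem]
    simp [mul_assoc, MulAut.mul_apply]
  have onemul : ∀ x : CircT A, 1 * x = x := by
    intro x
    apply CircT.val_injective
    simp [hmulval, honeval]
  have exinv : ∀ x : CircT A, ∃ y : CircT A, y * x = 1 := by
    intro x
    have hinj : Function.Injective (fun y : CircT A => y * x) := by
      intro y z hyz
      apply CircT.val_injective
      have h := congrArg CircT.val hyz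
      simp only [hmulval] at h
      exact (γ x.val).injective (mul_right_cancel h)
    exact (Finite.injective_iff_surjective.1 hinj) 1
  letI : Inv (CircT A) := ⟨fun x => Classical.choose (exinv x)⟩
  letI : Group (CircT A) := Group.ofLeftAxioms assoc onemul
    (fun x => Classical.choose_spec (exinv x))
  set ahat : CircT A := ⟨a, Subgroup.mem_zpowers a⟩ with hahat
  have hpowval : ∀ k : ℕ, (ahat ^ k).val = circPow γ a k := by
    intro k
    induction k with
    | zero => rw [pow_zero]; rfl
    | succ k ih =>
      rw [pow_succ, hmulval, ih]
      rfl
  have hcard : Nat.card (CircT A) = p ^ n := by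
    rw [Nat.card_congr (⟨fun x : CircT A => (⟨x.val, x.mem⟩ : ↥A), fun y => ⟨y.1, y.2⟩,
      fun x => rfl, fun y => rfl⟩ : CircT A ≃ ↥A)]
    rw [hA, Nat.card_zpowers, ha]
  -- The order of `a` in the circle group is `pⁿ`.
  have hord_dvd : orderOf ahat ∣ p ^ n := hcard ▸ orderOf_dvd_natCard ahat
  obtain ⟨j, hj, hordj⟩ := (Nat.dvd_prime_pow hp).1 hord_dvd
  have hiff : ∀ k : ℕ, circPow γ a k = 1 ↔ ahat ^ k = 1 := by
    intro k
    constructor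
    · intro h
      apply CircT.val_injective
      rw [hpowval, h, honeval]
    · intro h
      rw [← hpowval, h, honeval]
  have hordn : orderOf ahat = p ^ n := by
    rcases Nat.eq_zero_or_pos n with rfl | hn
    · interval_cases j
      exact hordj
    · have h1 : circPow γ a (p ^ j) = 1 := (hiff _).2 (by rw [← hordj, pow_orderOf_eq_one])
      have hE : p ^ n ∣ ∑ i ∈ Finset.range (p ^ j), s ^ i := by
        rw [part1] at h1
        rw [← ha]
        exact orderOf_dvd_of_pow_eq_one h1
      have hpE : p ∣ ∑ i ∈ Finset.range (p ^ j), s ^ i :=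
        dvd_trans (dvd_pow_self p hn.ne') hE
      have hs1 : s % p = 1 :=
        geomsum_mod_one hp (pow_pos hp.pos j) ⟨j, rfl⟩ hpE
      have hnj : p ^ n ∣ p ^ j := (geomsum_pow_dvd_iff hp hp2 hs1 n (p ^ j)).1 hE
      have : n ≤ j := (Nat.pow_dvd_pow_iff_le_right hp.one_lt).1 hnj
      rw [hordj]
      congr 1
      omega
  refine ⟨part1, ?_, ?_⟩
  · intro k
    rw [hiff k, ha, ← hordn]
    exact orderOf_dvd_iff_pow_eq_one.symm
  · intro x hx
    have htop : Subgroup.zpowers ahat = ⊤ := by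
      apply Subgroup.eq_top_of_card_eq
      rw [Nat.card_zpowers, hordn, hcard]
    have hx' : (⟨x, hx⟩ : CircT A) ∈ Subgroup.zpowers ahat := htop ▸ Subgroup.mem_top _
    rw [← mem_powers_iff_mem_zpowers] at hx'
    obtain ⟨k, hk⟩ := hx'
    exact ⟨k, by rw [← hpowval]; exact congrArg CircT.val hk⟩
end HGS
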